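/- Let Γ=(G,X) be a graph with sources and T a recursive path decomposition of Γ. Then the cospan g = X ↪ G ← ∅ has a monoidal path decomposition of width exactly width(T). -/

import Mathlib

open CategoryTheory MonoidalCategory

namespace MWidth

section


variable {V E : Type}

/-- every edge has one or two endpoints -/
def EndsSmall (ends : E → Set V) : Prop := ∀ e, ∃ u w : V, ends e = {u, w}

/-! ### Tree decompositions (Robertson–Seymour style) -/

structure TreeDec (ends : E → Set V) (ι : Type) where
  Y : SimpleGraph ι
  conn : Y.Connected
  acyc : Y.IsAcyclic
  t : ι → Set V
  cover : ∀ v : V, ∃ i, v ∈ t i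
  edge : ∀ e : E, ∃ i, ends e ⊆ t i
  sep : ∀ ⦃i j k : ι⦄ (p : Y.Walk i k), p.IsPath → j ∈ p.support → t i ∩ t k ⊆ t j

noncomputable def TreeDec.width {ends : E → Set V} {ι : Type} (D : TreeDec ends ι) : ℕ :=
  ⨆ i, (D.t i).ncard

/-! ### Recursive tree decompositions -/

inductive RTree (V : Type) where
  | nil : RTree V
  | node : RTree V → Set V → RTree V → RTree V

namespace RTree

noncomputable def width : RTree V → ℕ
  | nil => 0
  | node T1 W T2 => max W.ncard (max T1.width T2.width)

def label : RTree V → Set V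
  | nil => ∅
  | node _ W _ => W

inductive Subtree : RTree V → RTree V → Prop
  | refl (T : RTree V) : Subtree T T
  | left {T' T1 T2 : RTree V} {W : Set V} : Subtree T' T1 → Subtree T' (node T1 W T2)
  | right {T' T1 T2 : RTree V} {W : Set V} : Subtree T' T2 → Subtree T' (node T1 W T2)

end RTree

/-- `IsRTD ends vs es X T` : `T` is a recursive tree decomposition of the graph with
sources `((vs,es),X)` living inside the ambient graph `(V,E,ends)`. -/
def IsRTD (ends : E → Set V) : Set V → Set E → Set V → RTree V → Prop
  | vs, es, _, .nil => vs = ∅ ∧ es = ∅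
  | vs, es, X, .node T1 W T2 =>
      W.Nonempty ∧ W ⊆ vs ∧ X ⊆ W ∧
      ∃ (vs1 vs2 : Set V) (es1 es2 : Set E),
        vs1 ⊆ vs ∧ vs2 ⊆ vs ∧ es1 ⊆ es ∧ es2 ⊆ es ∧
        (∀ e ∈ es1, ends e ⊆ vs1) ∧ (∀ e ∈ es2, ends e ⊆ vs2) ∧
        W ∪ vs1 ∪ vs2 = vs ∧ es1 ∩ es2 = ∅ ∧ vs1 ∩ vs2 ⊆ W ∧
        (∀ e ∈ es \ (es1 ∪ es2), ends e ⊆ W) ∧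
        IsRTD ends vs1 es1 (vs1 ∩ W) T1 ∧ IsRTD ends vs2 es2 (vs2 ∩ W) T2

/-! ### Path decompositions -/

def IsPathDec (ends : E → Set V) (L : List (Set V)) : Prop :=
  (∀ v : V, ∃ W ∈ L, v ∈ W) ∧ (∀ e : E, ∃ W ∈ L, ends e ⊆ W) ∧
    ∀ i j k : ℕ, i ≤ j → j ≤ k → k < L.length →
      L.getD i ∅ ∩ L.getD k ∅ ⊆ L.getD j ∅

/-- width of a list of bags (used both for path decompositions and recursive
path decompositions) -/
noncomputable def pdWidth : List (Set V) → ℕ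
  | [] => 0
  | W :: L => max W.ncard (pdWidth L)

/-- `IsRPD ends vs es X L` : `L` is a recursive path decomposition of `((vs,es),X)`. -/
def IsRPD (ends : E → Set V) : Set V → Set E → Set V → List (Set V) → Prop
  | vs, es, _, [] => vs = ∅ ∧ es = ∅
  | vs, es, X, V1 :: L =>
      V1.Nonempty ∧ V1 ⊆ vs ∧ X ⊆ V1 ∧
      ∃ (vs' : Set V) (es' : Set E),
        vs' ⊆ vs ∧ es' ⊆ es ∧ (∀ e ∈ es', ends e ⊆ vs') ∧
        V1 ∪ vs' = vs ∧ (∀ e ∈ es \ es', ends e ⊆ V1) ∧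
        IsRPD ends vs' es' (V1 ∩ vs') L

/-! ### Branch decompositions -/

/-- binary trees whose nodes are labelled by subgraphs-with-sources `(vs,es,X)` -/
inductive BT (V E : Type) where
  | nil : BT V E
  | leaf : Set V → Set E → Set V → BT V E
  | node : BT V E → Set V → Set E → Set V → BT V E → BT V E

namespace BT

noncomputable def width : BT V E → ℕ
  | nil => 0
  | leaf _ _ X => X.ncard
  | node T1 _ _ X T2 => max X.ncard (max T1.width T2.width)

def labelV : BT V E → Set V
  | nil => ∅
  | leaf vs _ _ => vs
  | node _ vs _ _ _ => vs

def labelX : BT V E → Set V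
  | nil => ∅
  | leaf _ _ X => X
  | node _ _ _ X _ => X

inductive Subtree : BT V E → BT V E → Prop
  | refl (T : BT V E) : Subtree T T
  | left {T' T1 T2 : BT V E} {vs X : Set V} {es : Set E} :
      Subtree T' T1 → Subtree T' (node T1 vs es X T2)
  | right {T' T1 T2 : BT V E} {vs X : Set V} {es : Set E} :
      Subtree T' T2 → Subtree T' (node T1 vs es X T2)

end BT

/-- `IsRBD ends vs es X T` : `T` is a recursive branch decomposition of `((vs,es),X)`. -/
def IsRBD (ends : E → Set V) : Set V → Set E → Set V → BT V E → Prop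
  | _, es, _, .nil => es = ∅
  | vs, es, X, .leaf vs' es' X' => vs' = vs ∧ es' = es ∧ X' = X ∧ ∃ e, es = {e}
  | vs, es, X, .node T1 vs' es' X' T2 =>
      vs' = vs ∧ es' = es ∧ X' = X ∧
      ∃ (vs1 vs2 : Set V) (es1 es2 : Set E),
        vs1 ⊆ vs ∧ vs2 ⊆ vs ∧
        (∀ e ∈ es1, ends e ⊆ vs1) ∧ (∀ e ∈ es2, ends e ⊆ vs2) ∧
        es1 ∪ es2 = es ∧ es1 ∩ es2 = ∅ ∧ vs1 ∪ vs2 = vs ∧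
        IsRBD ends vs1 es1 ((vs1 ∩ vs2) ∪ (X ∩ vs1)) T1 ∧
        IsRBD ends vs2 es2 ((vs1 ∩ vs2) ∪ (X ∩ vs2)) T2

/-- branch decompositions: subcubic trees with leaves in bijection with the edges -/
structure BranchDec (E ι : Type) where
  Y : SimpleGraph ι
  conn : Y.Connected
  acyc : Y.IsAcyclic
  subcubic : ∀ i : ι, (Y.neighborSet i).ncard ≤ 3
  b : {i : ι // (Y.neighborSet i).ncard = 1} ≃ E

/-- the edges of `G` on the `u`-side of the edge `{u,w}` of the decomposition tree -/
def BranchDec.side {E ι : Type} (D : BranchDec E ι) (u w : ι) : Set E :=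
  { e | ∃ l : {i : ι // (D.Y.neighborSet i).ncard = 1},
      (D.Y.deleteEdges {s(u, w)}).Reachable u l.1 ∧ D.b l = e }

def edgeEnds (ends : E → Set V) (A : Set E) : Set V := ⋃ e ∈ A, ends e

noncomputable def BranchDec.order (ends : E → Set V) {ι : Type} (D : BranchDec E ι)
    (u w : ι) : ℕ :=
  (edgeEnds ends (D.side u w) ∩ edgeEnds ends (D.side w u)).ncard

noncomputable def BranchDec.bwidth (ends : E → Set V) {ι : Type} (D : BranchDec E ι) : ℕ :=
  ⨆ p : {p : ι × ι // D.Y.Adj p.1 p.2}, D.order ends p.1.1 p.1.2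

/-! ### min-max widths -/

noncomputable def treewidth (ends : E → Set V) : ℕ :=
  sInf { n | ∃ (ι : Type) (_ : Finite ι) (D : TreeDec ends ι), D.width = n }

noncomputable def pathwidth (ends : E → Set V) : ℕ :=
  sInf { n | ∃ L : List (Set V), IsPathDec ends L ∧ pdWidth L = n }

noncomputable def branchwidth (ends : E → Set V) : ℕ :=
  sInf { n | ∃ (ι : Type) (_ : Fintype ι) (D : BranchDec E ι), D.bwidth ends = n }

end
section


/-! ## Undirected graphs as a category -/

structure UGr : Type 1 where
  V : Type
  E : Type
  ends : E → Set V
  small : ∀ e, ∃ u w : V, ends e = {u, w}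

@[ext]
structure UGrHom (G H : UGr) where
  onV : G.V → H.V
  onE : G.E → H.E
  comm : ∀ e, H.ends (onE e) = onV '' G.ends e

instance : Category UGr where
  Hom := UGrHom
  id G := ⟨id, id, fun e => (Set.image_id _).symm⟩
  comp f g := ⟨g.onV ∘ f.onV, g.onE ∘ f.onE, fun e => by
    simp only [Function.comp_apply, g.comm, f.comm, Set.image_image]⟩
  id_comp f := by cases f; rfl
  comp_id f := by cases f; rfl
  assoc f g h := rfl

/-- the vertex functor -/
def vertF : UGr ⥤ Type where
  obj G := G.V
  map f := TypeCat.ofHom f.onV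
  map_id _ := rfl
  map_comp _ _ := rfl

/-- the edge functor -/
def edgeF : UGr ⥤ Type where
  obj G := G.E
  map f := TypeCat.ofHom f.onE
  map_id _ := rfl
  map_comp _ _ := rfl

/-! ## Cospans of graphs with discrete feet -/

structure Csp (X Y : Type) : Type 1 where
  G : UGr
  l : X → G.V
  r : Y → G.V

/-- glueing relation for the pushout -/
def glueR {X Y Z : Type} (c1 : Csp X Y) (c2 : Csp Y Z) :
    (c1.G.V ⊕ c2.G.V) → (c1.G.V ⊕ c2.G.V) → Prop :=
  fun a b => ∃ y : Y, a = Sum.inl (c1.r y) ∧ b = Sum.inr (c2.l y)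

/-- composition of cospans by pushout -/
def Csp.comp {X Y Z : Type} (c1 : Csp X Y) (c2 : Csp Y Z) : Csp X Z where
  G :=
    { V := Quot (glueR c1 c2)
      E := c1.G.E ⊕ c2.G.E
      ends := fun e =>
        Sum.rec (fun e1 => (fun v => Quot.mk _ (Sum.inl v)) '' c1.G.ends e1)
          (fun e2 => (fun v => Quot.mk _ (Sum.inr v)) '' c2.G.ends e2) e
      small := by
        rintro (e1 | e2)
        · obtain ⟨u, w, h⟩ := c1.G.small e1
          exact ⟨Quot.mk _ (Sum.inl u), Quot.mk _ (Sum.inl w), by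
            show (fun v => Quot.mk _ (Sum.inl v)) '' c1.G.ends e1 = _
            rw [h, Set.image_pair]⟩
        · obtain ⟨u, w, h⟩ := c2.G.small e2
          exact ⟨Quot.mk _ (Sum.inr u), Quot.mk _ (Sum.inr w), by
            show (fun v => Quot.mk _ (Sum.inr v)) '' c2.G.ends e2 = _
            rw [h, Set.image_pair]⟩ }
  l := fun x => Quot.mk _ (Sum.inl (c1.l x))
  r := fun z => Quot.mk _ (Sum.inr (c2.r z))

/-- monoidal product of cospans: disjoint union -/
def Csp.tens {X1 Y1 X2 Y2 : Type} (c1 : Csp X1 Y1) (c2 : Csp X2 Y2) :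
    Csp (X1 ⊕ X2) (Y1 ⊕ Y2) where
  G :=
    { V := c1.G.V ⊕ c2.G.V
      E := c1.G.E ⊕ c2.G.E
      ends := fun e =>
        Sum.rec (fun e1 => Sum.inl '' c1.G.ends e1) (fun e2 => Sum.inr '' c2.G.ends e2) e
      small := by
        rintro (e1 | e2)
        · obtain ⟨u, w, h⟩ := c1.G.small e1
          exact ⟨Sum.inl u, Sum.inl w, by show Sum.inl '' c1.G.ends e1 = _; rw [h, Set.image_pair]⟩
        · obtain ⟨u, w, h⟩ := c2.G.small e2
          exact ⟨Sum.inr u, Sum.inr w, by show Sum.inr '' c2.G.ends e2 = _; rw [h, Set.image_pair]⟩ }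
  l := Sum.rec (fun x => Sum.inl (c1.l x)) (fun x => Sum.inr (c2.l x))
  r := Sum.rec (fun y => Sum.inl (c1.r y)) (fun y => Sum.inr (c2.r y))

/-- isomorphism of cospans (equality of morphisms in `Cospan_D(UGraph)`) -/
structure CspIso {X Y : Type} (c d : Csp X Y) where
  eV : c.G.V ≃ d.G.V
  eE : c.G.E ≃ d.G.E
  comm : ∀ e, d.G.ends (eE e) = eV '' c.G.ends e
  lcomm : ∀ x, eV (c.l x) = d.l x
  rcomm : ∀ y, eV (c.r y) = d.r y

/-! ### monoidal decompositions of cospans -/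

/-- monoidal decompositions: all morphisms are atomic -/
inductive CD : Type → Type → Type 2
  | atom {X Y : Type} (c : Csp X Y) : CD X Y
  | seq {X Z : Type} (M : Type) (d1 : CD X M) (d2 : CD M Z) : CD X Z
  | tens {X1 Y1 X2 Y2 : Type} (d1 : CD X1 Y1) (d2 : CD X2 Y2) : CD (X1 ⊕ X2) (Y1 ⊕ Y2)

def CD.eval : ∀ {X Y : Type}, CD X Y → Csp X Y
  | _, _, .atom c => c
  | _, _, .seq _ d1 d2 => d1.eval.comp d2.eval
  | _, _, .tens d1 d2 => d1.eval.tens d2.eval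

noncomputable def CD.width : ∀ {X Y : Type}, CD X Y → ℕ
  | _, _, .atom c => Nat.card c.G.V
  | _, _, .seq M d1 d2 => max (Nat.card M) (max d1.width d2.width)
  | _, _, .tens d1 d2 => max d1.width d2.width

/-- monoidal (right) tree decompositions: sequential composition only with an
atomic left factor -/
inductive CTD : Type → Type → Type 2
  | atom {X Y : Type} (c : Csp X Y) : CTD X Y
  | tens {X1 Y1 X2 Y2 : Type} (d1 : CTD X1 Y1) (d2 : CTD X2 Y2) : CTD (X1 ⊕ X2) (Y1 ⊕ Y2)
  | seqA {X Z : Type} (M : Type) (c : Csp X M) (d : CTD M Z) : CTD X Z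

def CTD.eval : ∀ {X Y : Type}, CTD X Y → Csp X Y
  | _, _, .atom c => c
  | _, _, .tens d1 d2 => d1.eval.tens d2.eval
  | _, _, .seqA _ c d => c.comp d.eval

noncomputable def CTD.width : ∀ {X Y : Type}, CTD X Y → ℕ
  | _, _, .atom c => Nat.card c.G.V
  | _, _, .tens d1 d2 => max d1.width d2.width
  | _, _, .seqA M c d => max (Nat.card c.G.V) (max (Nat.card M) d.width)

/-- monoidal path decompositions: only sequential composition -/
inductive CPD : Type → Type → Type 2
  | atom {X Y : Type} (c : Csp X Y) : CPD X Y
  | seq {X Z : Type} (M : Type) (d1 : CPD X M) (d2 : CPD M Z) : CPD X Z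

def CPD.eval : ∀ {X Y : Type}, CPD X Y → Csp X Y
  | _, _, .atom c => c
  | _, _, .seq _ d1 d2 => d1.eval.comp d2.eval

noncomputable def CPD.width : ∀ {X Y : Type}, CPD X Y → ℕ
  | _, _, .atom c => Nat.card c.G.V
  | _, _, .seq M d1 d2 => max (Nat.card M) (max d1.width d2.width)

/-! ### monoidal widths of cospans -/

noncomputable def cmwd {X Y : Type} (c : Csp X Y) : ℕ :=
  sInf { n | ∃ d : CD X Y, Nonempty (CspIso d.eval c) ∧ d.width = n }

noncomputable def ctwd {X Y : Type} (c : Csp X Y) : ℕ :=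
  sInf { n | ∃ d : CTD X Y, Nonempty (CspIso d.eval c) ∧ d.width = n }

noncomputable def cpwd {X Y : Type} (c : Csp X Y) : ℕ :=
  sInf { n | ∃ d : CPD X Y, Nonempty (CspIso d.eval c) ∧ d.width = n }

/-! ### cospans associated to graphs with sources -/

def grOf {V E : Type} (ends : E → Set V) (hs : ∀ e, ∃ u w : V, ends e = {u, w}) : UGr :=
  ⟨V, E, ends, hs⟩

/-- the cospan `X ↪ G ← ∅` associated to a graph with sources `(G, X)` -/
def srcCsp {V E : Type} (ends : E → Set V) (hs : ∀ e, ∃ u w : V, ends e = {u, w})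
    (X : Set V) : Csp ↥X Empty :=
  ⟨grOf ends hs, fun x => x.1, Empty.elim⟩

/-- the cospan `∅ → G ← ∅` associated to a graph `G` -/
def closedCsp {V E : Type} (ends : E → Set V) (hs : ∀ e, ∃ u w : V, ends e = {u, w}) :
    Csp Empty Empty :=
  ⟨grOf ends hs, Empty.elim, Empty.elim⟩

end

section Aux

variable {V E : Type}

/-- the subgraph of the ambient graph on vertex set `vs`, edge set `es` -/
def subG (ends : E → Set V) (hs : EndsSmall ends) (vs : Set V) (es : Set E)
    (he : ∀ e ∈ es, ends e ⊆ vs) : UGr where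
  V := ↥vs
  E := ↥es
  ends := fun e => {v : ↥vs | v.1 ∈ ends e.1}
  small := by
    rintro ⟨e, hee⟩
    obtain ⟨u, w, h⟩ := hs e
    refine ⟨⟨u, he e hee (by rw [h]; exact Or.inl rfl)⟩,
            ⟨w, he e hee (by rw [h]; exact Or.inr rfl)⟩, ?_⟩
    ext v
    simp only [Set.mem_setOf_eq, h, Set.mem_insert_iff, Set.mem_singleton_iff]
    constructor
    · rintro (h1 | h1)
      · exact Or.inl (Subtype.ext h1)
      · exact Or.inr (Subtype.ext h1)
    · rintro (rfl | rfl)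
      · exact Or.inl rfl
      · exact Or.inr rfl

/-- the cospan `X → (vs,es) ← Y` -/
def sCsp2 (ends : E → Set V) (hs : EndsSmall ends) (vs : Set V) (es : Set E)
    (he : ∀ e ∈ es, ends e ⊆ vs) (X Y : Set V) (hX : X ⊆ vs) (hY : Y ⊆ vs) :
    Csp ↥X ↥Y :=
  ⟨subG ends hs vs es he, fun x => ⟨x.1, hX x.2⟩, fun y => ⟨y.1, hY y.2⟩⟩

/-- the cospan `X → (vs,es) ← ∅` -/
def sCsp0 (ends : E → Set V) (hs : EndsSmall ends) (vs : Set V) (es : Set E)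
    (he : ∀ e ∈ es, ends e ⊆ vs) (X : Set V) (hX : X ⊆ vs) : Csp ↥X Empty :=
  ⟨subG ends hs vs es he, fun x => ⟨x.1, hX x.2⟩, Empty.elim⟩

def CspIso.refl {X Y : Type} (c : Csp X Y) : CspIso c c :=
  ⟨Equiv.refl _, Equiv.refl _, fun _ => (Set.image_id _).symm, fun _ => rfl, fun _ => rfl⟩

def CspIso.trans {X Y : Type} {a b c : Csp X Y} (i : CspIso a b) (j : CspIso b c) :
    CspIso a c where
  eV := i.eV.trans j.eV
  eE := i.eE.trans j.eE
  comm e := by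
    show c.G.ends (j.eE (i.eE e)) = _
    rw [j.comm, i.comm, Set.image_image]
    rfl
  lcomm x := by
    show j.eV (i.eV (a.l x)) = c.l x
    rw [i.lcomm, j.lcomm]
  rcomm y := by
    show j.eV (i.eV (a.r y)) = c.r y
    rw [i.rcomm, j.rcomm]

def compCongrRight {X Y Z : Type} (c : Csp X Y) {d d' : Csp Y Z} (i : CspIso d d') :
    CspIso (c.comp d) (c.comp d') where
  eV :=
    { toFun := Quot.lift (fun a => Quot.mk (glueR c d') (Sum.map id i.eV a)) (by
        rintro a b ⟨y, rfl, rfl⟩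
        exact Quot.sound ⟨y, rfl, by simp [i.lcomm]⟩)
      invFun := Quot.lift (fun a => Quot.mk (glueR c d) (Sum.map id i.eV.symm a)) (by
        rintro a b ⟨y, rfl, rfl⟩
        refine Quot.sound ⟨y, rfl, ?_⟩
        simp only [Sum.map_inr, Sum.inr.injEq]
        rw [← i.lcomm, Equiv.symm_apply_apply])
      left_inv := by
        refine Quot.ind ?_
        rintro (v | v)
        · rfl
        · show Quot.mk _ (Sum.inr (i.eV.symm (i.eV v))) = _
          rw [Equiv.symm_apply_apply]
      right_inv := by
        refine Quot.ind ?_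
        rintro (v | v)
        · rfl
        · show Quot.mk _ (Sum.inr (i.eV (i.eV.symm v))) = _
          rw [Equiv.apply_symm_apply] }
  eE := Equiv.sumCongr (Equiv.refl _) i.eE
  comm := by
    rintro (e1 | e2)
    · show (fun v => Quot.mk (glueR c d') (Sum.inl v)) '' c.G.ends e1 = _
      rw [show (c.comp d).G.ends (Sum.inl e1)
          = (fun v => Quot.mk (glueR c d) (Sum.inl v)) '' c.G.ends e1 from rfl]
      refine Eq.trans ?_ (Set.image_image _ _ _).symm
      rfl
    · show (fun v => Quot.mk (glueR c d') (Sum.inr v)) '' d'.G.ends (i.eE e2) = _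
      rw [i.comm, Set.image_image,
        show (c.comp d).G.ends (Sum.inr e2)
          = (fun v => Quot.mk (glueR c d) (Sum.inr v)) '' d.G.ends e2 from rfl]
      refine Eq.trans ?_ (Set.image_image _ _ _).symm
      rfl
  lcomm x := rfl
  rcomm z := by
    show Quot.mk _ (Sum.inr (i.eV (d.r z))) = Quot.mk _ (Sum.inr (d'.r z))
    rw [i.rcomm]

lemma glueIso (ends : E → Set V) (hs : EndsSmall ends)
    (V1 vs' vs : Set V) (es1 es' es : Set E)
    (he1 : ∀ e ∈ es1, ends e ⊆ V1) (he' : ∀ e ∈ es', ends e ⊆ vs')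
    (he : ∀ e ∈ es, ends e ⊆ vs)
    (X : Set V) (hX1 : X ⊆ V1) (hXvs : X ⊆ vs)
    (hV1 : V1 ⊆ vs) (hvs' : vs' ⊆ vs)
    (hvv : V1 ∪ vs' = vs) (hes : es1 ∪ es' = es) (hdisj : es1 ∩ es' = ∅) :
    Nonempty (CspIso
      ((sCsp2 ends hs V1 es1 he1 X (V1 ∩ vs') hX1 Set.inter_subset_left).comp
        (sCsp0 ends hs vs' es' he' (V1 ∩ vs') Set.inter_subset_right))
      (sCsp0 ends hs vs es he X hXvs)) := by
  set c1 := sCsp2 ends hs V1 es1 he1 X (V1 ∩ vs') hX1 Set.inter_subset_left with hc1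
  set c2 := sCsp0 ends hs vs' es' he' (V1 ∩ vs') Set.inter_subset_right with hc2
  have fbij : Function.Bijective (Quot.lift
      (Sum.rec (fun v : ↥V1 => (⟨v.1, hV1 v.2⟩ : ↥vs))
        (fun v : ↥vs' => (⟨v.1, hvs' v.2⟩ : ↥vs)))
      (by rintro a b ⟨y, rfl, rfl⟩; rfl) : Quot (glueR c1 c2) → ↥vs) := by
    constructor
    · refine Quot.ind fun a => Quot.ind fun b h => ?_
      rcases a with v | v <;> rcases b with w | w
      · have h' : (⟨v.1, hV1 v.2⟩ : ↥vs) = ⟨w.1, hV1 w.2⟩ := h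
        have hvw : v.1 = w.1 := congrArg (fun z : ↥vs => z.1) h'
        obtain rfl : v = w := Subtype.ext hvw
        rfl
      · have h' : (⟨v.1, hV1 v.2⟩ : ↥vs) = ⟨w.1, hvs' w.2⟩ := h
        have hvw : v.1 = w.1 := congrArg (fun z : ↥vs => z.1) h'
        refine Quot.sound ⟨⟨v.1, v.2, by rw [hvw]; exact w.2⟩, ?_, ?_⟩
        · exact congrArg Sum.inl (Subtype.ext rfl)
        · exact congrArg Sum.inr (Subtype.ext hvw.symm)
      · have h' : (⟨v.1, hvs' v.2⟩ : ↥vs) = ⟨w.1, hV1 w.2⟩ := h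
        have hvw : v.1 = w.1 := congrArg (fun z : ↥vs => z.1) h'
        refine (Quot.sound (r := glueR c1 c2)
          ⟨⟨w.1, w.2, by rw [← hvw]; exact v.2⟩, ?_, ?_⟩).symm
        · exact congrArg Sum.inl (Subtype.ext rfl)
        · exact congrArg Sum.inr (Subtype.ext hvw)
      · have h' : (⟨v.1, hvs' v.2⟩ : ↥vs) = ⟨w.1, hvs' w.2⟩ := h
        have hvw : v.1 = w.1 := congrArg (fun z : ↥vs => z.1) h'
        obtain rfl : v = w := Subtype.ext hvw
        rfl
    · rintro ⟨v, hv⟩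
      have hv' : v ∈ V1 ∪ vs' := by rw [hvv]; exact hv
      rcases hv' with h | h
      · exact ⟨Quot.mk _ (Sum.inl ⟨v, h⟩), rfl⟩
      · exact ⟨Quot.mk _ (Sum.inr ⟨v, h⟩), rfl⟩
  have gbij : Function.Bijective
      (Sum.rec (fun e : ↥es1 => (⟨e.1, by rw [← hes]; exact Or.inl e.2⟩ : ↥es))
        (fun e : ↥es' => (⟨e.1, by rw [← hes]; exact Or.inr e.2⟩ : ↥es)) :
        ↥es1 ⊕ ↥es' → ↥es) := by
    constructor
    · rintro (e | e) (g | g) h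
      · have h' : (⟨e.1, by rw [← hes]; exact Or.inl e.2⟩ : ↥es)
            = ⟨g.1, by rw [← hes]; exact Or.inl g.2⟩ := h
        have hvw : e.1 = g.1 := congrArg (fun z : ↥es => z.1) h'
        obtain rfl : e = g := Subtype.ext hvw
        rfl
      · have h' : (⟨e.1, by rw [← hes]; exact Or.inl e.2⟩ : ↥es)
            = ⟨g.1, by rw [← hes]; exact Or.inr g.2⟩ := h
        have hvw : e.1 = g.1 := congrArg (fun z : ↥es => z.1) h'
        have : e.1 ∈ es1 ∩ es' := ⟨e.2, by rw [hvw]; exact g.2⟩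
        rw [hdisj] at this
        exact absurd this (Set.notMem_empty _)
      · have h' : (⟨e.1, by rw [← hes]; exact Or.inr e.2⟩ : ↥es)
            = ⟨g.1, by rw [← hes]; exact Or.inl g.2⟩ := h
        have hvw : e.1 = g.1 := congrArg (fun z : ↥es => z.1) h'
        have : g.1 ∈ es1 ∩ es' := ⟨g.2, by rw [← hvw]; exact e.2⟩
        rw [hdisj] at this
        exact absurd this (Set.notMem_empty _)
      · have h' : (⟨e.1, by rw [← hes]; exact Or.inr e.2⟩ : ↥es)
            = ⟨g.1, by rw [← hes]; exact Or.inr g.2⟩ := h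
        have hvw : e.1 = g.1 := congrArg (fun z : ↥es => z.1) h'
        obtain rfl : e = g := Subtype.ext hvw
        rfl
    · rintro ⟨e, hee⟩
      have he2 : e ∈ es1 ∪ es' := by rw [hes]; exact hee
      rcases he2 with h | h
      · exact ⟨Sum.inl ⟨e, h⟩, rfl⟩
      · exact ⟨Sum.inr ⟨e, h⟩, rfl⟩
  refine ⟨{ eV := Equiv.ofBijective _ fbij, eE := Equiv.ofBijective _ gbij,
            comm := ?_, lcomm := fun x => rfl, rcomm := fun y => y.elim }⟩
  rintro (e1 | e2)
  · show {v : ↥vs | v.1 ∈ ends e1.1} = _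
    rw [show (c1.comp c2).G.ends (Sum.inl e1)
        = (fun v => Quot.mk (glueR c1 c2) (Sum.inl v)) '' {v : ↥V1 | v.1 ∈ ends e1.1} from rfl]
    refine Eq.trans ?_ (Set.image_image _ _ _).symm
    ext ⟨v, hv⟩
    simp only [Set.mem_setOf_eq, Set.mem_image]
    constructor
    · intro h
      exact ⟨⟨v, he1 e1.1 e1.2 h⟩, h, rfl⟩
    · rintro ⟨w, hw, h⟩
      have h' : (⟨w.1, hV1 w.2⟩ : ↥vs) = ⟨v, hv⟩ := h
      obtain rfl : w.1 = v := congrArg (fun z : ↥vs => z.1) h'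
      exact hw
  · show {v : ↥vs | v.1 ∈ ends e2.1} = _
    rw [show (c1.comp c2).G.ends (Sum.inr e2)
        = (fun v => Quot.mk (glueR c1 c2) (Sum.inr v)) '' {v : ↥vs' | v.1 ∈ ends e2.1} from rfl]
    refine Eq.trans ?_ (Set.image_image _ _ _).symm
    ext ⟨v, hv⟩
    simp only [Set.mem_setOf_eq, Set.mem_image]
    constructor
    · intro h
      exact ⟨⟨v, he' e2.1 e2.2 h⟩, h, rfl⟩
    · rintro ⟨w, hw, h⟩
      have h' : (⟨w.1, hvs' w.2⟩ : ↥vs) = ⟨v, hv⟩ := h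
      obtain rfl : w.1 = v := congrArg (fun z : ↥vs => z.1) h'
      exact hw

noncomputable def univIso (ends : E → Set V) (hs : EndsSmall ends) (X : Set V)
    (he : ∀ e ∈ (Set.univ : Set E), ends e ⊆ Set.univ) :
    CspIso (sCsp0 ends hs Set.univ Set.univ he X (Set.subset_univ X)) (srcCsp ends hs X) where
  eV := Equiv.Set.univ V
  eE := Equiv.Set.univ E
  comm e := by
    ext v
    simp only [srcCsp, grOf, sCsp0, subG, Set.mem_image, Set.mem_setOf_eq]
    constructor
    · intro h
      exact ⟨⟨v, trivial⟩, h, rfl⟩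
    · rintro ⟨w, hw, rfl⟩
      exact hw
  lcomm x := rfl
  rcomm y := y.elim

lemma auxRPD [Finite V] (ends : E → Set V) (hs : EndsSmall ends) :
    ∀ (L : List (Set V)) (vs : Set V) (es : Set E) (X : Set V)
      (he : ∀ e ∈ es, ends e ⊆ vs) (hX : X ⊆ vs),
      IsRPD ends vs es X L →
      ∃ d : CPD ↥X Empty, Nonempty (CspIso d.eval (sCsp0 ends hs vs es he X hX)) ∧
        d.width = pdWidth L := by
  intro L
  induction L with
  | nil =>
    intro vs es X he hX h
    obtain ⟨rfl, rfl⟩ := h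
    refine ⟨CPD.atom (sCsp0 ends hs ∅ ∅ he X hX), ⟨CspIso.refl _⟩, ?_⟩
    show Nat.card ↥(∅ : Set V) = 0
    rw [Nat.card_coe_set_eq, Set.ncard_empty]
  | cons V1 L ih =>
    intro vs es X he hX h
    obtain ⟨hne, hV1vs, hXV1, vs', es', hvs'sub, hes'sub, he', huni, hout, hrec⟩ := h
    obtain ⟨d', ⟨i'⟩, hw'⟩ := ih vs' es' (V1 ∩ vs') he' Set.inter_subset_right hrec
    refine ⟨CPD.seq ↥(V1 ∩ vs')
      (CPD.atom (sCsp2 ends hs V1 (es \ es') hout X (V1 ∩ vs') hXV1 Set.inter_subset_left))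
      d', ?_, ?_⟩
    · obtain ⟨g⟩ := glueIso ends hs V1 vs' vs (es \ es') es' es hout he' he X hXV1 hX
        hV1vs hvs'sub huni (Set.diff_union_of_subset hes'sub) Set.diff_inter_self
      exact ⟨(compCongrRight _ i').trans g⟩
    · show max (Nat.card ↥(V1 ∩ vs')) (max (Nat.card ↥V1) d'.width)
        = max V1.ncard (pdWidth L)
      rw [hw', Nat.card_coe_set_eq, Nat.card_coe_set_eq]
      exact max_eq_right (le_trans
        (Set.ncard_le_ncard Set.inter_subset_left (Set.toFinite V1))
        (le_max_left _ _))

end Aux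

/-- A recursive path decomposition of `(G,X)` yields a monoidal path
decomposition of the cospan `X ↪ G ← ∅` of exactly the same width. -/
theorem stmt15 {V E : Type} [Finite V] [Finite E]
    (ends : E → Set V) (hs : EndsSmall ends)
    (X : Set V) (T : List (Set V)) (hT : IsRPD ends Set.univ Set.univ X T) :
    ∃ d : CPD ↥X Empty, Nonempty (CspIso d.eval (srcCsp ends hs X)) ∧
      d.width = pdWidth T := by
  have he : ∀ e ∈ (Set.univ : Set E), ends e ⊆ Set.univ := fun _ _ => Set.subset_univ _
  obtain ⟨d, ⟨i⟩, hw⟩ := auxRPD ends hs T Set.univ Set.univ X he (Set.subset_univ X) hT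
  exact ⟨d, ⟨i.trans (univIso ends hs X he)⟩, hw⟩

end MWidth
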